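/- Let c ≥ 5041 be an integer with σ(c)/c ≥ e^γ · log(log c), and suppose that every integer m with 5041 ≤ m < c satisfies σ(m)/m < e^γ · log(log m) (i.e., c is the least counterexample to Robin's inequality). Then for every prime q dividing c, if a denotes the multiplicity of q in the prime factorization of c, then q^a < q · exp(M(ω(c))). -/

import Mathlib

open Real Finset

/-- `Nk k` is the `k`-th primorial: the product of the first `k` primes
(`Nat.nth Nat.Prime i` is the `(i+1)`-st prime, so `Nat.nth Nat.Prime 0 = 2`). -/
noncomputable def Nk (k : ℕ) : ℕ := ∏ i ∈ Finset.range k, Nat.nth Nat.Prime i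

/-- `M k = exp (e^(-γ) * N_k / φ(N_k)) - log N_k`. -/
noncomputable def M (k : ℕ) : ℝ :=
  Real.exp (Real.exp (-Real.eulerMascheroniConstant) * (Nk k : ℝ) / (Nat.totient (Nk k) : ℝ))
    - Real.log (Nk k)

lemma nth_prime_le_orderEmbOfFin (s : Finset ℕ) (hs : ∀ p ∈ s, Nat.Prime p)
    (i : Fin s.card) : Nat.nth Nat.Prime i ≤ s.orderEmbOfFin rfl i := by
  have hmem : ∀ j : Fin s.card, s.orderEmbOfFin rfl j ∈ s :=
    fun j => s.orderEmbOfFin_mem rfl j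
  have hcount : (i : ℕ) ≤ Nat.count Nat.Prime (s.orderEmbOfFin rfl i) := by
    rw [Nat.count_eq_card_filter_range]
    have hsub : (Finset.univ.filter (fun j : Fin s.card => j < i)).image
        (fun j => (s.orderEmbOfFin rfl j : ℕ))
        ⊆ (Finset.range (s.orderEmbOfFin rfl i)).filter Nat.Prime := by
      intro x hx
      simp only [Finset.mem_image, Finset.mem_filter, Finset.mem_univ, true_and] at hx
      obtain ⟨j, hj, rfl⟩ := hx
      exact Finset.mem_filter.2
        ⟨Finset.mem_range.2 ((s.orderEmbOfFin rfl).strictMono hj), hs _ (hmem j)⟩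
    have hcard := Finset.card_le_card hsub
    have hfi : (Finset.univ.filter (fun j : Fin s.card => j < i)) = Finset.Iio i := by
      ext j; simp
    rwa [Finset.card_image_of_injective _ (fun a b hab => (s.orderEmbOfFin rfl).injective hab),
      hfi, Fin.card_Iio] at hcard
  calc Nat.nth Nat.Prime i
      ≤ Nat.nth Nat.Prime (Nat.count Nat.Prime (s.orderEmbOfFin rfl i)) :=
        Nat.nth_monotone Nat.infinite_setOf_prime hcount
    _ = s.orderEmbOfFin rfl i := Nat.nth_count (hs _ (hmem i))

lemma prod_orderEmbOfFin_eq {Mo : Type} [CommMonoid Mo] (s : Finset ℕ) (g : ℕ → Mo) :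
    ∏ i : Fin s.card, g (s.orderEmbOfFin rfl i) = ∏ p ∈ s, g p := by
  refine Finset.prod_nbij (fun i => (s.orderEmbOfFin rfl i : ℕ)) ?_ ?_ ?_ (fun _ _ => rfl)
  · intro j _; exact s.orderEmbOfFin_mem rfl j
  · intro a _ b _ hab; exact (s.orderEmbOfFin rfl).injective hab
  · intro p hp
    have : p ∈ Set.range (s.orderEmbOfFin rfl) := by
      rw [Finset.range_orderEmbOfFin]; exact hp
    obtain ⟨j, hj⟩ := this
    exact ⟨j, by simp, hj⟩

lemma ratio_antitone {x y : ℝ} (h2 : 2 ≤ x) (hxy : x ≤ y) : y / (y - 1) ≤ x / (x - 1) := by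
  have hx : 0 < x - 1 := by linarith
  have hy : 0 < y - 1 := by linarith
  rw [div_le_div_iff₀ hy hx]
  nlinarith

lemma totient_prod_primes {ι : Type} [DecidableEq ι] (s : Finset ι) (g : ι → ℕ)
    (hg : ∀ i ∈ s, (g i).Prime) (hinj : ∀ i ∈ s, ∀ j ∈ s, g i = g j → i = j) :
    Nat.totient (∏ i ∈ s, g i) = ∏ i ∈ s, (g i - 1) := by
  induction s using Finset.induction_on with
  | empty => simp
  | insert a t ha ih =>
    rw [Finset.prod_insert ha, Finset.prod_insert ha,
      Nat.totient_mul, Nat.totient_prime (hg a (Finset.mem_insert_self a t)),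
      ih (fun i hi => hg i (Finset.mem_insert_of_mem hi))
        (fun i hi j hj hij => hinj i (Finset.mem_insert_of_mem hi) j
          (Finset.mem_insert_of_mem hj) hij)]
    · exact Nat.Coprime.prod_right fun i hi =>
        (Nat.coprime_primes (hg a (Finset.mem_insert_self a t))
          (hg i (Finset.mem_insert_of_mem hi))).2
          (fun h => ha (by
            have := hinj a (Finset.mem_insert_self a t) i (Finset.mem_insert_of_mem hi) h
            rwa [this]))

lemma sigma_pp_div_lt (p a : ℕ) (hp : p.Prime) :
    ((ArithmeticFunction.sigma 1 (p ^ a) : ℕ) : ℝ) / (p ^ a : ℕ) < (p : ℝ) / ((p : ℝ) - 1) := by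
  have hp2 : (2 : ℝ) ≤ (p : ℝ) := by exact_mod_cast hp.two_le
  have hp1 : (0 : ℝ) < (p : ℝ) - 1 := by linarith
  have hppos : (0 : ℝ) < (p : ℝ) := by linarith
  rw [ArithmeticFunction.sigma_one_apply_prime_pow hp]
  push_cast
  rw [div_lt_div_iff₀ (pow_pos hppos a) hp1]
  have hgeom : (∑ j ∈ Finset.range (a + 1), (p : ℝ) ^ j) * ((p : ℝ) - 1)
      = (p : ℝ) ^ (a + 1) - 1 := geom_sum_mul (p : ℝ) (a + 1)
  rw [hgeom, pow_succ]
  nlinarith [pow_pos hppos a]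

theorem least_counterexample_prime_power_bound (c : ℕ) (hc : 5041 ≤ c)
    (hcounter : Real.exp Real.eulerMascheroniConstant * Real.log (Real.log c) ≤
      (ArithmeticFunction.sigma 1 c : ℝ) / c)
    (hleast : ∀ m : ℕ, 5041 ≤ m → m < c →
      (ArithmeticFunction.sigma 1 m : ℝ) / m <
        Real.exp Real.eulerMascheroniConstant * Real.log (Real.log m)) :
    ∀ q : ℕ, q.Prime → q ∣ c →
      (q : ℝ) ^ (c.factorization q) < (q : ℝ) * Real.exp (M c.primeFactors.card) := by
  intro q hq hqc
  have hc0 : c ≠ 0 := by omega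
  have hc1 : 1 < c := by omega
  set S := c.primeFactors with hS
  set k := S.card with hk
  have hqS : q ∈ S := Nat.mem_primeFactors.2 ⟨hq, hqc, hc0⟩
  have hSprime : ∀ p ∈ S, p.Prime := fun p hp => Nat.prime_of_mem_primeFactors hp
  have hSne : S.Nonempty := ⟨q, hqS⟩
  -- σ and c as products over prime factors
  have hcprodN : ∏ p ∈ S, p ^ c.factorization p = c := by
    have := Nat.factorization_prod_pow_eq_self hc0
    rwa [Finsupp.prod, Nat.support_factorization] at this
  have hcprod : (c : ℝ) = ∏ p ∈ S, ((p ^ c.factorization p : ℕ) : ℝ) := by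
    exact_mod_cast hcprodN.symm
  have hσprod : ((ArithmeticFunction.sigma 1 c : ℕ) : ℝ)
      = ∏ p ∈ S, ((ArithmeticFunction.sigma 1 (p ^ c.factorization p) : ℕ) : ℝ) := by
    have := ArithmeticFunction.isMultiplicative_sigma (k := 1)
      |>.multiplicative_factorization _ hc0
    rw [Finsupp.prod, Nat.support_factorization] at this
    exact_mod_cast this
  -- Step 1: σ(c)/c < ∏_{p | c} p/(p-1)
  have hstep1 : ((ArithmeticFunction.sigma 1 c : ℕ) : ℝ) / c
      < ∏ p ∈ S, (p : ℝ) / ((p : ℝ) - 1) := by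
    rw [hσprod, hcprod, ← Finset.prod_div_distrib]
    refine Finset.prod_lt_prod_of_nonempty ?_ ?_ hSne
    · intro p hp
      have hppos : 0 < p := (hSprime p hp).pos
      have h1 : 0 < ArithmeticFunction.sigma 1 (p ^ c.factorization p) := by
        rw [ArithmeticFunction.sigma_one_apply]
        exact Finset.sum_pos (fun d hd => Nat.pos_of_mem_divisors hd)
          ⟨1, Nat.one_mem_divisors.2 (pow_ne_zero _ hppos.ne')⟩
      positivity
    · intro p hp
      exact sigma_pp_div_lt p _ (hSprime p hp)
  -- Step 2: compare with the first k primes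
  have hnth_le : ∀ i : Fin k, Nat.nth Nat.Prime i ≤ S.orderEmbOfFin rfl i :=
    nth_prime_le_orderEmbOfFin S hSprime
  have hstep2 : ∏ p ∈ S, (p : ℝ) / ((p : ℝ) - 1)
      ≤ ∏ i ∈ Finset.range k, ((Nat.nth Nat.Prime i : ℝ) / ((Nat.nth Nat.Prime i : ℝ) - 1)) := by
    rw [← prod_orderEmbOfFin_eq S (fun p => (p : ℝ) / ((p : ℝ) - 1)),
      ← Fin.prod_univ_eq_prod_range]
    refine Finset.prod_le_prod ?_ ?_
    · intro i _
      have h2 : 2 ≤ Nat.nth Nat.Prime i := (Nat.prime_nth_prime i).two_le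
      have h2' : (2 : ℝ) ≤ ((S.orderEmbOfFin rfl i : ℕ) : ℝ) := by
        exact_mod_cast le_trans h2 (hnth_le i)
      exact div_nonneg (by linarith) (by linarith)
    · intro i _
      refine ratio_antitone ?_ ?_
      · exact_mod_cast (Nat.prime_nth_prime i).two_le
      · exact_mod_cast hnth_le i
  -- N_k and its totient
  have hNkpos : 0 < Nk k := by
    rw [Nk]
    exact Finset.prod_pos fun i _ => (Nat.prime_nth_prime i).pos
  have hφNk : Nat.totient (Nk k) = ∏ i ∈ Finset.range k, (Nat.nth Nat.Prime i - 1) := by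
    rw [Nk]
    exact totient_prod_primes _ _ (fun i _ => Nat.prime_nth_prime i)
      (fun i _ j _ hij => (Nat.nth_injective Nat.infinite_setOf_prime) hij)
  have hQ : ∏ i ∈ Finset.range k, ((Nat.nth Nat.Prime i : ℝ) / ((Nat.nth Nat.Prime i : ℝ) - 1))
      = (Nk k : ℝ) / (Nat.totient (Nk k) : ℝ) := by
    rw [Finset.prod_div_distrib, hφNk, Nk, Nat.cast_prod, Nat.cast_prod]
    congr 1
    refine Finset.prod_congr rfl fun i _ => ?_
    rw [Nat.cast_sub (Nat.prime_nth_prime i).one_le, Nat.cast_one]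
  -- Combine: e^γ log log c < N_k / φ(N_k)
  have hmain : Real.exp Real.eulerMascheroniConstant * Real.log (Real.log c)
      < (Nk k : ℝ) / (Nat.totient (Nk k) : ℝ) := by
    calc Real.exp Real.eulerMascheroniConstant * Real.log (Real.log c)
        ≤ ((ArithmeticFunction.sigma 1 c : ℕ) : ℝ) / c := hcounter
      _ < ∏ p ∈ S, (p : ℝ) / ((p : ℝ) - 1) := hstep1
      _ ≤ ∏ i ∈ Finset.range k,
          ((Nat.nth Nat.Prime i : ℝ) / ((Nat.nth Nat.Prime i : ℝ) - 1)) := hstep2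
      _ = _ := hQ
  -- Deduce log c < M k + log (Nk k)
  have hlogc_pos : 0 < Real.log c := Real.log_pos (by exact_mod_cast hc1)
  have hφpos : (0 : ℝ) < (Nat.totient (Nk k) : ℝ) := by
    exact_mod_cast Nat.totient_pos.2 hNkpos
  have hloglog : Real.log (Real.log c)
      < Real.exp (-Real.eulerMascheroniConstant) * (Nk k : ℝ) / (Nat.totient (Nk k) : ℝ) := by
    have hT : Real.exp Real.eulerMascheroniConstant *
        (Real.exp (-Real.eulerMascheroniConstant) * (Nk k : ℝ) / (Nat.totient (Nk k) : ℝ))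
        = (Nk k : ℝ) / (Nat.totient (Nk k) : ℝ) := by
      rw [mul_div_assoc, ← mul_assoc, ← Real.exp_add]
      simp
    have hm := hmain
    rw [← hT] at hm
    exact (mul_lt_mul_iff_right₀ (Real.exp_pos _)).1 hm
  have hlogc : Real.log c < M k + Real.log (Nk k) := by
    have := Real.exp_lt_exp.2 hloglog
    rw [Real.exp_log hlogc_pos] at this
    rw [M]
    linarith
  have hclt : (c : ℝ) < Real.exp (M k) * (Nk k : ℝ) := by
    have h1 : (c : ℝ) = Real.exp (Real.log c) :=
      (Real.exp_log (by exact_mod_cast Nat.pos_of_ne_zero hc0)).symm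
    have h2 : Real.exp (M k + Real.log (Nk k)) = Real.exp (M k) * (Nk k : ℝ) := by
      rw [Real.exp_add, Real.exp_log (by exact_mod_cast hNkpos)]
    rw [h1, ← h2]
    exact Real.exp_lt_exp.2 hlogc
  -- q^(a-1) * Nk k ≤ c
  set a := c.factorization q with ha
  have ha1 : 1 ≤ a := hq.factorization_pos_of_dvd hc0 hqc
  have hNk_le_rad : Nk k ≤ ∏ p ∈ S, p := by
    rw [Nk, ← Fin.prod_univ_eq_prod_range, ← prod_orderEmbOfFin_eq S (fun p => p)]
    exact Finset.prod_le_prod' fun i _ => hnth_le i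
  have hdvd : q ^ a * ∏ p ∈ S.erase q, p ∣ c := by
    refine Nat.Coprime.mul_dvd_of_dvd_of_dvd ?_ (Nat.ordProj_dvd c q) ?_
    · refine Nat.Coprime.pow_left _ (Nat.Coprime.prod_right fun p hp => ?_)
      exact (Nat.coprime_primes hq (hSprime p (Finset.mem_of_mem_erase hp))).2
        (Ne.symm (Finset.ne_of_mem_erase hp))
    · exact dvd_trans (Finset.prod_dvd_prod_of_subset _ _ _ (Finset.erase_subset q S))
        (Nat.prod_primeFactors_dvd c)
  have hradsplit : ∏ p ∈ S, p = q * ∏ p ∈ S.erase q, p :=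
    (Finset.mul_prod_erase S _ hqS).symm
  have hkey : q ^ (a - 1) * Nk k ≤ c := by
    calc q ^ (a - 1) * Nk k ≤ q ^ (a - 1) * ∏ p ∈ S, p :=
          Nat.mul_le_mul_left _ hNk_le_rad
      _ = q ^ a * ∏ p ∈ S.erase q, p := by
          rw [hradsplit, ← mul_assoc, ← pow_succ, Nat.sub_add_cancel ha1]
      _ ≤ c := Nat.le_of_dvd (Nat.pos_of_ne_zero hc0) hdvd
  -- conclude
  have hqpos : (0 : ℝ) < (q : ℝ) := by exact_mod_cast hq.pos
  have hNkR : (0 : ℝ) < (Nk k : ℝ) := by exact_mod_cast hNkpos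
  have hstep : (q : ℝ) ^ (a - 1) < Real.exp (M k) := by
    have h1 : (q : ℝ) ^ (a - 1) * (Nk k : ℝ) ≤ (c : ℝ) := by exact_mod_cast hkey
    have h2 : (q : ℝ) ^ (a - 1) * (Nk k : ℝ) < Real.exp (M k) * (Nk k : ℝ) :=
      lt_of_le_of_lt h1 hclt
    exact lt_of_mul_lt_mul_right h2 hNkR.le
  calc (q : ℝ) ^ a = (q : ℝ) * (q : ℝ) ^ (a - 1) := by
        rw [← pow_succ', Nat.sub_add_cancel ha1]
    _ < (q : ℝ) * Real.exp (M k) := by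
        exact mul_lt_mul_of_pos_left hstep hqpos
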